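/- Let d, r be integers with 0 < r < d, set n = d + r, and let A = (x_1,…,x_n) ∈ Γ_n^d with x_1 ≤ x_2 ≤ … ≤ x_n. If i is such that x_i ≤ r, then per_i^+(A) = per(A) + per(A_{i^*, x_{i^*}+d}) − per(A_{i^*, x_{i^*}}). If i is such that x_i ≥ 2, then per_i^−(A) = per(A) + per(A_{i_*, x_{i_*}−1}) − per(A_{i_*, x_{i_*}+d−1}). -/

import Mathlib

/-- The permanent of an `n × n` matrix: `per(A) = ∑_{σ ∈ S_n} ∏_i A i (σ i)`. -/
def permanent {n : ℕ}  (A : Matrix (Fin n) (Fin n) ℕ) : ℕ :=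
  ∑ σ : Equiv.Perm (Fin n), ∏ i, A i (σ i)

/-- The `(0,1)`-matrix determined by the configuration `x` (1-indexed starting columns):
entry `(i,j)` (with `j : Fin n` representing column `j+1`) is `1` iff
`x i ≤ j+1 ≤ x i + d - 1`. -/
def confMatrix (n d : ℕ) (x : Fin n → ℕ) : Matrix (Fin n) (Fin n) ℕ :=
  fun i j => if x i ≤ (j : ℕ) + 1 ∧ (j : ℕ) + 1 ≤ x i + d - 1 then 1 else 0

/-- A valid configuration for `Γ_n^d`: `1 ≤ x i ≤ n - d + 1` for all `i`. -/
def ValidConf (n d : ℕ) (x : Fin n → ℕ) : Prop :=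
  ∀ i, 1 ≤ x i ∧ x i ≤ n - d + 1

/-- Membership in `Γ_n^d`: the set of `n × n` `(0,1)`-matrices each of whose rows has
exactly `d` ones forming a contiguous block. -/
def IsGamma (n d : ℕ) (A : Matrix (Fin n) (Fin n) ℕ) : Prop :=
  ∃ x : Fin n → ℕ, ValidConf n d x ∧ A = confMatrix n d x

/-- `A_{i,j}`: the matrix obtained from `A` by deleting row `i` and column `j`. -/
def delMinor {n : ℕ} (A : Matrix (Fin (n + 1)) (Fin (n + 1)) ℕ) (i j : Fin (n + 1)) :
    Matrix (Fin n) (Fin n) ℕ :=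
  A.submatrix i.succAbove j.succAbove

/-- `i^* = max { k : x k = x i }`. -/
def istar {n : ℕ} (x : Fin n → ℕ) (i : Fin n) : Fin n :=
  (Finset.univ.filter fun k => x k = x i).max' ⟨i, by simp⟩

/-- `i_* = min { k : x k = x i }`. -/
def isubstar {n : ℕ} (x : Fin n → ℕ) (i : Fin n) : Fin n :=
  (Finset.univ.filter fun k => x k = x i).min' ⟨i, by simp⟩

lemma prod_updateRow {n : ℕ} (A : Matrix (Fin n) (Fin n) ℕ) (k : Fin n) (w : Fin n → ℕ)
    (σ : Equiv.Perm (Fin n)) :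
    ∏ i, (A.updateRow k w) i (σ i) = w (σ k) * ∏ i ∈ Finset.univ.erase k, A i (σ i) := by
  rw [← Finset.mul_prod_erase _ _ (Finset.mem_univ k), Matrix.updateRow_self]
  congr 1
  exact Finset.prod_congr rfl fun i hi => by
    rw [Matrix.updateRow_ne (Finset.ne_of_mem_erase hi)]

lemma permanent_updateRow_add {n : ℕ} (A : Matrix (Fin n) (Fin n) ℕ) (k : Fin n)
    (u v : Fin n → ℕ) :
    permanent (A.updateRow k (u + v)) =
      permanent (A.updateRow k u) + permanent (A.updateRow k v) := by
  unfold permanent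
  rw [← Finset.sum_add_distrib]
  refine Finset.sum_congr rfl fun σ _ => ?_
  rw [prod_updateRow, prod_updateRow, prod_updateRow]
  simp [add_mul]

lemma permanent_updateRow_single {n : ℕ} (A : Matrix (Fin (n+1)) (Fin (n+1)) ℕ)
    (k c : Fin (n+1)) :
    permanent (A.updateRow k (fun j => if j = c then 1 else 0)) =
      permanent (delMinor A k c) := by
  unfold permanent
  have h1 : ∀ σ : Equiv.Perm (Fin (n+1)),
      ∏ i, (A.updateRow k (fun j => if j = c then 1 else 0)) i (σ i)
        = if σ k = c then ∏ i ∈ Finset.univ.erase k, A i (σ i) else 0 := by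
    intro σ
    rw [prod_updateRow]
    split <;> simp_all
  simp_rw [h1]
  rw [Finset.sum_ite, Finset.sum_const_zero, add_zero]
  -- bijection
  refine (Finset.sum_nbij' (i := fun σ => Equiv.removeNone
      (((finSuccEquiv' k).symm.trans σ).trans (finSuccEquiv' c)))
    (j := fun τ => (finSuccEquiv' k).trans ((Equiv.optionCongr τ).trans (finSuccEquiv' c).symm))
    ?_ ?_ ?_ ?_ ?_)
  · intro σ hσ; exact Finset.mem_univ _
  · intro τ _
    simp only [Finset.mem_filter, Finset.mem_univ, true_and]
    simp [Equiv.trans_apply, finSuccEquiv'_at, finSuccEquiv'_symm_none]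
  · intro σ hσ
    simp only [Finset.mem_filter, Finset.mem_univ, true_and] at hσ
    set e : Option (Fin n) ≃ Option (Fin n) := ((finSuccEquiv' k).symm.trans σ).trans (finSuccEquiv' c)
    have he : e none = none := by
      simp [e, Equiv.trans_apply, finSuccEquiv'_symm_none, hσ, finSuccEquiv'_at]
    have hoc : Equiv.optionCongr (Equiv.removeNone e) = e := by
      refine Equiv.ext fun o => ?_
      cases o with
      | none => simp [he]
      | some j =>
        obtain ⟨b, hb⟩ : ∃ b, e (some j) = some b := by
          cases h : e (some j) with
          | none => exact absurd (e.injective (h.trans he.symm)) (by simp)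
          | some b => exact ⟨b, rfl⟩
        simp only [Equiv.optionCongr_apply, Option.map_some]
        exact Equiv.removeNone_some e ⟨b, hb⟩
    apply Equiv.ext
    intro a
    have : ((finSuccEquiv' k).trans ((Equiv.optionCongr (Equiv.removeNone e)).trans (finSuccEquiv' c).symm)) a
        = ((finSuccEquiv' k).trans (e.trans (finSuccEquiv' c).symm)) a := by rw [hoc]
    rw [this]
    simp [e, Equiv.trans_apply]
  · intro τ _
    set e : Option (Fin n) ≃ Option (Fin n) :=
      ((finSuccEquiv' k).symm.trans ((finSuccEquiv' k).trans ((Equiv.optionCongr τ).trans (finSuccEquiv' c).symm))).trans (finSuccEquiv' c)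
    have : e = Equiv.optionCongr τ := by
      apply Equiv.ext; intro o; simp [e, Equiv.trans_apply]
    show Equiv.removeNone e = τ
    rw [this, Equiv.removeNone_optionCongr]
  · intro σ hσ
    simp only [Finset.mem_filter, Finset.mem_univ, true_and] at hσ
    -- f σ = g (i σ)
    set τ := Equiv.removeNone (((finSuccEquiv' k).symm.trans σ).trans (finSuccEquiv' c)) with hτ
    have hστ : ∀ j : Fin n, σ (k.succAbove j) = c.succAbove (τ j) := by
      intro j
      set e : Option (Fin n) ≃ Option (Fin n) := ((finSuccEquiv' k).symm.trans σ).trans (finSuccEquiv' c) with he'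
      have he : e none = none := by
        simp [he', Equiv.trans_apply, finSuccEquiv'_symm_none, hσ, finSuccEquiv'_at]
      obtain ⟨b, hb⟩ : ∃ b, e (some j) = some b := by
        cases h : e (some j) with
        | none => exact absurd (e.injective (h.trans he.symm)) (by simp)
        | some b => exact ⟨b, rfl⟩
      have h2 := Equiv.removeNone_some e ⟨b, hb⟩
      have h3 : e (some j) = some (τ j) := h2.symm
      have : finSuccEquiv' c (σ (k.succAbove j)) = some (τ j) := by
        have := h3
        simpa [he', Equiv.trans_apply, finSuccEquiv'_symm_some] using this
      have := congrArg (finSuccEquiv' c).symm this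
      simpa [finSuccEquiv'_symm_some] using this
    have himg : Finset.univ.erase k = Finset.univ.image k.succAbove := by
      ext a
      simp only [Finset.mem_erase, Finset.mem_univ, and_true, Finset.mem_image, true_and]
      constructor
      · intro h
        obtain ⟨j, hj⟩ := Fin.exists_succAbove_eq h
        exact ⟨j, hj⟩
      · rintro ⟨j, rfl⟩
        exact Fin.succAbove_ne k j
    rw [himg, Finset.prod_image (fun a _ b _ h => Fin.succAbove_right_injective h)]
    refine Finset.prod_congr rfl fun j _ => ?_
    rw [hστ j]
    rfl

lemma per_shift (n d : ℕ) (x : Fin (n+1) → ℕ) (k : Fin (n+1)) (v : ℕ) (c₁ c₂ : Fin (n+1))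
    (hpt : ∀ j : Fin (n+1),
      (if x k ≤ (j:ℕ)+1 ∧ (j:ℕ)+1 ≤ x k + d - 1 then 1 else 0) + (if j = c₁ then 1 else 0)
        = (if v ≤ (j:ℕ)+1 ∧ (j:ℕ)+1 ≤ v + d - 1 then 1 else 0) + (if j = c₂ then 1 else 0)) :
    (permanent (confMatrix (n+1) d (Function.update x k v)) : ℤ) =
      (permanent (confMatrix (n+1) d x) : ℤ)
        + (permanent (delMinor (confMatrix (n+1) d x) k c₁) : ℤ)
        - (permanent (delMinor (confMatrix (n+1) d x) k c₂) : ℤ) := by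
  set A := confMatrix (n+1) d x with hA
  have hB : confMatrix (n+1) d (Function.update x k v)
      = A.updateRow k (fun j : Fin (n+1) => if v ≤ (j:ℕ)+1 ∧ (j:ℕ)+1 ≤ v + d - 1 then 1 else 0) := by
    ext a j
    by_cases h : a = k
    · subst h; simp [confMatrix, Matrix.updateRow_self, Function.update_self]
    · simp [hA, confMatrix, Matrix.updateRow_ne h, Function.update_of_ne h]
  have hAself : A = A.updateRow k (fun j : Fin (n+1) => if x k ≤ (j:ℕ)+1 ∧ (j:ℕ)+1 ≤ x k + d - 1 then 1 else 0) := by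
    have : (fun j : Fin (n+1) => if x k ≤ (j:ℕ)+1 ∧ (j:ℕ)+1 ≤ x k + d - 1 then 1 else 0) = A k := rfl
    rw [this, Matrix.updateRow_eq_self]
  have key : permanent (confMatrix (n+1) d (Function.update x k v))
        + permanent (delMinor A k c₂)
      = permanent A + permanent (delMinor A k c₁) := by
    have h1 : permanent (A.updateRow k
          ((fun j : Fin (n+1) => if x k ≤ (j:ℕ)+1 ∧ (j:ℕ)+1 ≤ x k + d - 1 then 1 else 0)
            + (fun j : Fin (n+1) => if j = c₁ then 1 else 0)))
        = permanent A + permanent (delMinor A k c₁) := by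
      rw [permanent_updateRow_add, permanent_updateRow_single, ← hAself]
    have h2 : permanent (A.updateRow k
          ((fun j : Fin (n+1) => if v ≤ (j:ℕ)+1 ∧ (j:ℕ)+1 ≤ v + d - 1 then 1 else 0)
            + (fun j : Fin (n+1) => if j = c₂ then 1 else 0)))
        = permanent (confMatrix (n+1) d (Function.update x k v))
            + permanent (delMinor A k c₂) := by
      rw [permanent_updateRow_add, permanent_updateRow_single, ← hB]
    have hrow : ((fun j : Fin (n+1) => if x k ≤ (j:ℕ)+1 ∧ (j:ℕ)+1 ≤ x k + d - 1 then 1 else 0)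
          + (fun j : Fin (n+1) => if j = c₁ then 1 else 0))
        = ((fun j : Fin (n+1) => if v ≤ (j:ℕ)+1 ∧ (j:ℕ)+1 ≤ v + d - 1 then 1 else 0)
          + (fun j : Fin (n+1) => if j = c₂ then 1 else 0)) := funext hpt
    rw [← h2, ← h1, hrow]
  omega

lemma istar_eq {n : ℕ} (x : Fin n → ℕ) (i : Fin n) : x (istar x i) = x i := by
  have := Finset.max'_mem (Finset.univ.filter fun k => x k = x i) ⟨i, by simp⟩
  exact (Finset.mem_filter.mp this).2

lemma isubstar_eq {n : ℕ} (x : Fin n → ℕ) (i : Fin n) : x (isubstar x i) = x i := by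
  have := Finset.min'_mem (Finset.univ.filter fun k => x k = x i) ⟨i, by simp⟩
  exact (Finset.mem_filter.mp this).2

/-- Expansion identities for the pushing operators.  For `A = (x₁,…,x_n) ∈ Γ_n^d`,
`n = d + r`, `0 < r < d`, with `x₁ ≤ … ≤ x_n`:
if `x i ≤ r` then `per_i^+(A) = per(A) + per(A_{i^*, x_{i^*}+d}) - per(A_{i^*, x_{i^*}})`,
and if `x i ≥ 2` then
`per_i^-(A) = per(A) + per(A_{i_*, x_{i_*}-1}) - per(A_{i_*, x_{i_*}+d-1})`.
Columns are encoded by `c : Fin (m+1)` with 1-indexed value `(c : ℕ) + 1`. -/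
theorem per_push_expansion (d r m : ℕ) (hr : 0 < r) (hrd : r < d)
    (hn : m + 1 = d + r)
    (x : Fin (m + 1) → ℕ) (hx : ValidConf (m + 1) d x) (hmono : Monotone x)
    (i : Fin (m + 1)) :
    (x i ≤ r →
      ∀ c₁ c₂ : Fin (m + 1),
        (c₁ : ℕ) + 1 = x (istar x i) + d → (c₂ : ℕ) + 1 = x (istar x i) →
        (permanent (confMatrix (m + 1) d
            (Function.update x (istar x i) (x (istar x i) + 1))) : ℤ) =
          (permanent (confMatrix (m + 1) d x) : ℤ)
            + (permanent (delMinor (confMatrix (m + 1) d x) (istar x i) c₁) : ℤ)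
            - (permanent (delMinor (confMatrix (m + 1) d x) (istar x i) c₂) : ℤ)) ∧
    (2 ≤ x i →
      ∀ c₁ c₂ : Fin (m + 1),
        (c₁ : ℕ) + 1 = x (isubstar x i) - 1 → (c₂ : ℕ) + 1 = x (isubstar x i) + d - 1 →
        (permanent (confMatrix (m + 1) d
            (Function.update x (isubstar x i) (x (isubstar x i) - 1))) : ℤ) =
          (permanent (confMatrix (m + 1) d x) : ℤ)
            + (permanent (delMinor (confMatrix (m + 1) d x) (isubstar x i) c₁) : ℤ)
            - (permanent (delMinor (confMatrix (m + 1) d x) (isubstar x i) c₂) : ℤ)) := by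
  have hd : 1 ≤ d := by omega
  constructor
  · intro hxi c₁ c₂ hc₁ hc₂
    set k := istar x i with hk
    have hXk : 1 ≤ x k := (hx k).1
    refine per_shift m d x k (x k + 1) c₁ c₂ ?_
    intro j
    simp only [Fin.ext_iff]
    split_ifs <;> omega
  · intro hxi c₁ c₂ hc₁ hc₂
    set k := isubstar x i with hk
    have hXk : 2 ≤ x k := by have := isubstar_eq x i; omega
    refine per_shift m d x k (x k - 1) c₁ c₂ ?_
    intro j
    simp only [Fin.ext_iff]
    split_ifs <;> omega
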